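/- arXiv:1009.4471 — 2 statements merged into one kernel-verified Lean document; each statement's English description precedes it below -/
import Mathlib

section
/- Let G be the line graph of a multigraph H, with maximum degree Δ ≥ 2. Then box(G) ≤ 2Δ(⌈log₂ log₂ Δ⌉ + 3) + 1. -/
/-- A `k`-box representation of a simple graph: each vertex gets an axis-parallel box
`∏ i, [l v i, r v i]` in `ℝ^k`, and distinct vertices are adjacent iff their boxes meet. -/
def SimpleGraph.HasBoxRep {V : Type*} (G : SimpleGraph V) (k : ℕ) : Prop :=
  ∃ l r : V → Fin k → ℝ, (∀ v i, l v i ≤ r v i) ∧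
    ∀ u v : V, u ≠ v →
      (G.Adj u v ↔ ∀ i, max (l u i) (l v i) ≤ min (r u i) (r v i))

/-- Boxicity: the minimum `k` such that `G` has a `k`-box representation. -/
noncomputable def SimpleGraph.boxicity {V : Type*} (G : SimpleGraph V) : ℕ :=
  sInf {k | G.HasBoxRep k}

/-- The line graph of a multigraph given by an endpoint map `ends : E → Sym2 V`:
vertices are the edges, two distinct edges adjacent iff they share an endpoint. -/
def lineGraph {V E : Type*} (ends : E → Sym2 V) : SimpleGraph E :=
  SimpleGraph.fromRel (fun e₁ e₂ => ∃ v, v ∈ ends e₁ ∧ v ∈ ends e₂)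

open Finset

private lemma boxhelp_common {a b c d t : ℝ} (h1 : a ≤ t) (h2 : t ≤ b) (h3 : c ≤ t) (h4 : t ≤ d) :
    max a c ≤ min b d := by
  have := le_max_left a c
  simp only [max_le_iff, le_min_iff]
  exact ⟨⟨h1.trans h2, h3.trans h2⟩, ⟨h1.trans h4, h3.trans h4⟩⟩

private lemma hasBoxRep_of_rep {W : Type*} (G : SimpleGraph W) {D : Type*} [Fintype D]
    (l r : W → D → ℝ) (hlr : ∀ v d, l v d ≤ r v d)
    (hadj : ∀ u v, G.Adj u v → ∀ d, max (l u d) (l v d) ≤ min (r u d) (r v d))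
    (hsep : ∀ u v, u ≠ v → ¬ G.Adj u v →
      ∃ d, ¬ (max (l u d) (l v d) ≤ min (r u d) (r v d)))
    (N : ℕ) (hN : Fintype.card D ≤ N) : G.HasBoxRep N := by
  classical
  let e := Fintype.equivFin D
  refine ⟨fun v i => if h : (i : ℕ) < Fintype.card D then l v (e.symm ⟨i, h⟩) else 0,
          fun v i => if h : (i : ℕ) < Fintype.card D then r v (e.symm ⟨i, h⟩) else 1, ?_, ?_⟩
  · intro v i
    by_cases h : (i : ℕ) < Fintype.card D
    · simp only [dif_pos h]; exact hlr _ _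
    · simp only [dif_neg h]; norm_num
  · intro u v huv
    constructor
    · intro hA i
      by_cases h : (i : ℕ) < Fintype.card D
      · simp only [dif_pos h]; exact hadj u v hA _
      · simp only [dif_neg h]; norm_num
    · intro hall
      by_contra hA
      obtain ⟨d, hd⟩ := hsep u v huv hA
      have hlt : ((e d : ℕ)) < N := lt_of_lt_of_le (e d).isLt hN
      have h2 := hall ⟨e d, hlt⟩
      simp only [dif_pos (show ((⟨(e d : ℕ), hlt⟩ : Fin N) : ℕ) < Fintype.card D from (e d).isLt)]
        at h2
      apply hd
      convert h2 using 3 <;>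
        · congr 1
          exact (Equiv.symm_apply_apply e d).symm.trans (by congr)

private lemma exists_greedy_coloring {α : Type*} [Fintype α] (R : α → α → Prop)
    [DecidableRel R] (hs : ∀ a b, R a b → R b a) (d : ℕ)
    (hdeg : ∀ a, (Finset.univ.filter (fun b => R a b)).card ≤ d) :
    ∃ C : α → ℕ, (∀ a, C a ≤ d) ∧ ∀ a b, a ≠ b → R a b → C a ≠ C b := by
  classical
  suffices h : ∀ s : Finset α, ∃ C : α → ℕ, (∀ a, C a ≤ d) ∧
      ∀ a ∈ s, ∀ b ∈ s, a ≠ b → R a b → C a ≠ C b by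
    obtain ⟨C, h1, h2⟩ := h Finset.univ
    exact ⟨C, h1, fun a b hab hr => h2 a (mem_univ a) b (mem_univ b) hab hr⟩
  intro s
  induction s using Finset.induction_on with
  | empty => exact ⟨fun _ => 0, fun _ => Nat.zero_le _, by simp⟩
  | @insert a s ha ih =>
    obtain ⟨C, hC, hprop⟩ := ih
    set used : Finset ℕ := (s.filter (fun b => R a b)).image C with husedd
    have hused : used.card ≤ d := by
      calc used.card ≤ (s.filter (fun b => R a b)).card := card_image_le
        _ ≤ (Finset.univ.filter (fun b => R a b)).card :=
            card_le_card (filter_subset_filter _ (subset_univ s))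
        _ ≤ d := hdeg a
    have : ∃ x, x ∈ Finset.range (d+1) ∧ x ∉ used := by
      by_contra hcon
      push_neg at hcon
      have : Finset.range (d+1) ⊆ used := fun x hx => hcon x hx
      have := card_le_card this
      simp only [card_range] at this
      omega
    obtain ⟨x, hx1, hx2⟩ := this
    refine ⟨Function.update C a x, ?_, ?_⟩
    · intro b
      by_cases hb : b = a
      · subst hb; rw [Function.update_self]; exact Nat.lt_succ_iff.mp (mem_range.mp hx1)
      · rw [Function.update_of_ne hb]; exact hC b
    · intro u hu v hv huv hr
      rcases Finset.mem_insert.mp hu with hu' | hu' <;>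
        rcases Finset.mem_insert.mp hv with hv' | hv'
      · exact absurd (hu'.trans hv'.symm) huv
      · subst hu'
        rw [Function.update_self, Function.update_of_ne (by rintro rfl; exact ha hv')]
        intro heq
        exact hx2 (husedd ▸ mem_image.mpr ⟨v, mem_filter.mpr ⟨hv', hr⟩, heq.symm⟩)
      · subst hv'
        rw [Function.update_self, Function.update_of_ne (by rintro rfl; exact ha hu')]
        intro heq
        exact hx2 (husedd ▸ mem_image.mpr ⟨u, mem_filter.mpr ⟨hu', hs _ _ hr⟩, heq⟩)
      · rw [Function.update_of_ne (by rintro rfl; exact ha hu'),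
            Function.update_of_ne (by rintro rfl; exact ha hv')]
        exact hprop u hu' v hv' huv hr

private lemma testBit_add_pow {a p : ℕ} (ha : a < 2^p) (q : ℕ) :
    (a + 2^p).testBit q = if q = p then true else a.testBit q := by
  rcases lt_trichotomy q p with h | h | h
  · rw [if_neg (by omega)]
    rw [Nat.testBit_eq_decide_div_mod_eq, Nat.testBit_eq_decide_div_mod_eq]
    have h2 : 2^p = 2 * 2^(p - q - 1) * 2^q := by
      rw [mul_assoc, ← pow_add]
      rw [show p - q - 1 + q = p - 1 by omega, ← pow_succ']
      congr 1
      omega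
    rw [h2, Nat.add_mul_div_right _ _ (Nat.two_pow_pos q)]
    congr 1
    rw [Nat.add_mul_mod_self_left]
  · subst h
    rw [if_pos rfl, Nat.testBit_eq_decide_div_mod_eq]
    have : (a + 2^q) / 2^q = 1 := by
      rw [Nat.add_div_right _ (Nat.two_pow_pos q), Nat.div_eq_of_lt ha]
    simp [this]
  · rw [if_neg (by omega), Nat.testBit_eq_false_of_lt (by
      calc a + 2^p < 2^p + 2^p := by omega
        _ = 2^(p+1) := by ring
        _ ≤ 2^q := Nat.pow_le_pow_right (by norm_num) h),
      Nat.testBit_eq_false_of_lt (lt_of_lt_of_le ha (Nat.pow_le_pow_right (by norm_num) h.le))]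

/-- the `r`-th XOR mask on `m` bits: bit `p` is `p.testBit r` -/
private def maskNat (r m : ℕ) : ℕ :=
  match m with
  | 0 => 0
  | m + 1 => maskNat r m + (if m.testBit r then 2^m else 0)

private lemma maskNat_lt (r m : ℕ) : maskNat r m < 2^m := by
  induction m with
  | zero => simp [maskNat]
  | succ m ih =>
    rw [maskNat]
    have : (2:ℕ)^(m+1) = 2^m + 2^m := by ring
    split <;> omega

private lemma testBit_maskNat (r m q : ℕ) :
    (maskNat r m).testBit q = (decide (q < m) && q.testBit r) := by
  induction m with
  | zero => simp [maskNat]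
  | succ m ih =>
    rw [maskNat]
    by_cases h : m.testBit r
    · rw [if_pos h, testBit_add_pow (maskNat_lt r m)]
      by_cases hq : q = m
      · subst hq; simp [h]
      · rw [if_neg hq, ih,
          show (decide (q < m + 1)) = (decide (q < m)) from
            decide_eq_decide.mpr (by omega)]
    · rw [if_neg h, add_zero, ih]
      by_cases hq : q = m
      · subst hq
        simp [h]
      · rw [show (decide (q < m + 1)) = (decide (q < m)) from
            decide_eq_decide.mpr (by omega)]

private lemma testBit_log2_self {n : ℕ} (h : n ≠ 0) : n.testBit n.log2 = true := by
  rw [Nat.testBit_eq_decide_div_mod_eq]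
  have h1 : 2 ^ n.log2 ≤ n := Nat.log2_self_le h
  have h2 : n < 2 ^ (n.log2 + 1) := Nat.lt_log2_self
  have : n / 2 ^ n.log2 = 1 := by
    have hpos : 0 < 2 ^ n.log2 := Nat.two_pow_pos _
    have hl : 1 ≤ n / 2 ^ n.log2 := (Nat.one_le_div_iff hpos).mpr h1
    have hu : n / 2 ^ n.log2 < 2 := by
      rw [Nat.div_lt_iff_lt_mul hpos]
      calc n < 2 ^ (n.log2 + 1) := h2
        _ = 2 * 2 ^ n.log2 := by ring
    omega
  simp [this]

private lemma testBit_log2_false {n j : ℕ} (h : n.log2 < j) : n.testBit j = false := by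
  apply Nat.testBit_eq_false_of_lt
  calc n < 2 ^ (n.log2 + 1) := Nat.lt_log2_self
    _ ≤ 2 ^ j := Nat.pow_le_pow_right (by norm_num) (by omega)

private lemma xor_xor_cancel (u v F : ℕ) : (u ^^^ F) ^^^ (v ^^^ F) = u ^^^ v := by
  rw [Nat.xor_assoc, Nat.xor_comm v F, ← Nat.xor_assoc F F v, Nat.xor_self, Nat.zero_xor]

/-- comparison of `u ^^^ F` and `v ^^^ F` is decided by the bit of `u ^^^ F`
at the highest bit where `u,v` differ -/
private lemma xor_lt_iff (F : ℕ) {u v : ℕ} (h : u ≠ v) :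
    (u ^^^ F) < (v ^^^ F) ↔ (u ^^^ F).testBit ((u ^^^ v).log2) = false := by
  set d := u ^^^ v with hd
  have hd0 : d ≠ 0 := fun hc => h (xor_eq_zero_iff.mp hc)
  set i := d.log2 with hi
  have hxx : (u ^^^ F) ^^^ (v ^^^ F) = d := xor_xor_cancel u v F
  have hbit : ∀ j, i < j → (u ^^^ F).testBit j = (v ^^^ F).testBit j := by
    intro j hj
    have hz : d.testBit j = false := testBit_log2_false hj
    rw [← hxx, Nat.testBit_xor] at hz
    revert hz
    cases h1 : (u ^^^ F).testBit j <;> cases h2 : (v ^^^ F).testBit j <;> simp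
  have hdiff : (u ^^^ F).testBit i ≠ (v ^^^ F).testBit i := by
    have hz : d.testBit i = true := testBit_log2_self hd0
    rw [← hxx, Nat.testBit_xor] at hz
    revert hz
    cases h1 : (u ^^^ F).testBit i <;> cases h2 : (v ^^^ F).testBit i <;> simp
  constructor
  · intro hlt
    by_contra hc
    have hu : (u ^^^ F).testBit i = true := by
      cases hb : (u ^^^ F).testBit i
      · exact absurd hb hc
      · rfl
    have hv : (v ^^^ F).testBit i = false := by
      cases hb : (v ^^^ F).testBit i
      · rfl
      · exact absurd (hu.trans hb.symm) hdiff
    have := Nat.lt_of_testBit i hv hu (fun j hj => (hbit j hj).symm)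
    omega
  · intro hc
    have hv : (v ^^^ F).testBit i = true := by
      cases hb : (v ^^^ F).testBit i
      · exact absurd (hc.trans hb.symm) hdiff
      · rfl
    exact Nat.lt_of_testBit i hc hv (fun j hj => hbit j hj)

private lemma xor_dichotomy (F : ℕ) {u v : ℕ} (h : u ≠ v) :
    (u ^^^ F < v ^^^ F ∧ (u ^^^ F).testBit ((u ^^^ v).log2) = false) ∨
    (v ^^^ F < u ^^^ F ∧ (u ^^^ F).testBit ((u ^^^ v).log2) = true) := by
  set i := (u ^^^ v).log2 with hi
  have hd0 : u ^^^ v ≠ 0 := fun hc => h (xor_eq_zero_iff.mp hc)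
  have hdiff : (u ^^^ F).testBit i ≠ (v ^^^ F).testBit i := by
    have hz : (u ^^^ v).testBit i = true := testBit_log2_self hd0
    rw [← xor_xor_cancel u v F, Nat.testBit_xor] at hz
    revert hz
    cases h1 : (u ^^^ F).testBit i <;> cases h2 : (v ^^^ F).testBit i <;> simp
  cases hb : (u ^^^ F).testBit i
  · exact Or.inl ⟨(xor_lt_iff F h).mpr hb, rfl⟩
  · right
    refine ⟨?_, rfl⟩
    have hvb : (v ^^^ F).testBit ((v ^^^ u).log2) = false := by
      rw [Nat.xor_comm v u, ← hi]
      cases h2 : (v ^^^ F).testBit i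
      · rfl
      · exact absurd (hb.trans h2.symm) hdiff
    exact (xor_lt_iff F (Ne.symm h)).mpr hvb

private lemma log2_lt_of_lt_pow {d m : ℕ} (hd : d ≠ 0) (h : d < 2^m) : d.log2 < m := by
  by_contra hc
  push_neg at hc
  have := Nat.log2_self_le hd
  have := Nat.pow_le_pow_right (show 1 ≤ 2 by norm_num) hc
  omega

/-- The key "3-mixing" property of the XOR-mask family. -/
private lemma exists_good_mask (m : ℕ) {x y z : ℕ} (hx : x < 2^m) (hy : y < 2^m) (hz : z < 2^m)
    (hxy : x ≠ y) (hxz : x ≠ z) :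
    ∃ r, r < Nat.clog 2 m + 1 ∧
      ((x ^^^ maskNat r m < y ^^^ maskNat r m ∧ x ^^^ maskNat r m < z ^^^ maskNat r m) ∨
       (y ^^^ maskNat r m < x ^^^ maskNat r m ∧ z ^^^ maskNat r m < x ^^^ maskNat r m)) := by
  set i := (x ^^^ y).log2 with hi
  set j := (x ^^^ z).log2 with hj
  have hdy : x ^^^ y ≠ 0 := fun hc => hxy (xor_eq_zero_iff.mp hc)
  have hdz : x ^^^ z ≠ 0 := fun hc => hxz (xor_eq_zero_iff.mp hc)
  have him : i < m := log2_lt_of_lt_pow hdy (Nat.xor_lt_two_pow hx hy)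
  have hjm : j < m := log2_lt_of_lt_pow hdz (Nat.xor_lt_two_pow hx hz)
  -- choose a mask index r such that the mask has equal/unequal bits at i and j as needed
  have hmclog : m ≤ 2 ^ Nat.clog 2 m := Nat.le_pow_clog (by norm_num) m
  have key : ∃ r, r < Nat.clog 2 m + 1 ∧
      ((maskNat r m).testBit i == (maskNat r m).testBit j) = (x.testBit i == x.testBit j) := by
    by_cases hij : i = j
    · rw [hij]
      exact ⟨Nat.clog 2 m, Nat.lt_succ_self _, by simp⟩
    · by_cases hxb : x.testBit i = x.testBit j
      · refine ⟨Nat.clog 2 m, Nat.lt_succ_self _, ?_⟩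
        rw [testBit_maskNat, testBit_maskNat,
          Nat.testBit_eq_false_of_lt (lt_of_lt_of_le him hmclog),
          Nat.testBit_eq_false_of_lt (lt_of_lt_of_le hjm hmclog), hxb]
        simp
      · have : ∃ r, r < Nat.clog 2 m ∧ i.testBit r ≠ j.testBit r := by
          by_contra hc
          push_neg at hc
          apply hij
          apply Nat.eq_of_testBit_eq
          intro r
          by_cases hr : r < Nat.clog 2 m
          · exact hc r hr
          · push_neg at hr
            rw [Nat.testBit_eq_false_of_lt, Nat.testBit_eq_false_of_lt]
            · exact lt_of_lt_of_le (lt_of_lt_of_le hjm hmclog)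
                (Nat.pow_le_pow_right (by norm_num) hr)
            · exact lt_of_lt_of_le (lt_of_lt_of_le him hmclog)
                (Nat.pow_le_pow_right (by norm_num) hr)
        obtain ⟨r, hr, hrb⟩ := this
        refine ⟨r, by omega, ?_⟩
        rw [testBit_maskNat, testBit_maskNat, decide_eq_true him, decide_eq_true hjm,
          Bool.true_and, Bool.true_and]
        revert hrb hxb
        cases i.testBit r <;> cases j.testBit r <;> cases x.testBit i <;> cases x.testBit j <;>
          simp
  obtain ⟨r, hr, hreq⟩ := key
  refine ⟨r, hr, ?_⟩
  set F := maskNat r m with hF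
  have hbits : (x ^^^ F).testBit i = (x ^^^ F).testBit j := by
    rw [Nat.testBit_xor, Nat.testBit_xor]
    revert hreq
    cases x.testBit i <;> cases x.testBit j <;> cases F.testBit i <;> cases F.testBit j <;> simp
  rcases xor_dichotomy F hxy with ⟨hlt, hb⟩ | ⟨hlt, hb⟩ <;>
    rcases xor_dichotomy F hxz with ⟨hlt', hb'⟩ | ⟨hlt', hb'⟩
  · exact Or.inl ⟨hlt, hlt'⟩
  · rw [← hi] at hb; rw [← hj] at hb'
    rw [hbits] at hb
    exact absurd (hb.symm.trans hb') (by simp)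
  · rw [← hi] at hb; rw [← hj] at hb'
    rw [hbits] at hb
    exact absurd (hb.symm.trans hb') (by simp)
  · exact Or.inr ⟨hlt, hlt'⟩

private lemma clog2_succ_le {x : ℕ} (hx : 1 ≤ x) : Nat.clog 2 (x+1) ≤ Nat.clog 2 x + 1 := by
  rw [Nat.clog_le_iff_le_pow (by norm_num)]
  have h1 : x ≤ 2 ^ Nat.clog 2 x := Nat.le_pow_clog (by norm_num) x
  calc x + 1 ≤ x + x := by omega
    _ = 2 * x := by ring
    _ ≤ 2 * 2 ^ Nat.clog 2 x := by omega
    _ = 2 ^ (Nat.clog 2 x + 1) := by ring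

private lemma clog2_le_self (x : ℕ) : Nat.clog 2 x ≤ x := by
  rw [Nat.clog_le_iff_le_pow (by norm_num)]
  exact (Nat.lt_two_pow_self (n := x)).le

private lemma le_two_pow_sub_two {Δ : ℕ} (h : 4 ≤ Δ) : Δ ≤ 2^(Δ-2) := by
  induction Δ with
  | zero => omega
  | succ n ih =>
    rcases Nat.lt_or_ge n 4 with h4 | h4
    · have : n = 3 := by omega
      subst this
      norm_num
    · have := ih (by omega)
      have h1 : (2:ℕ)^(n-2) ≥ 1 := Nat.one_le_two_pow
      calc n + 1 ≤ 2^(n-2) + 2^(n-2) := by omega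
        _ = 2^(n-2+1) := by ring
        _ = 2^(n+1-2) := by congr 1; omega

private lemma clog2_ge_one {Δ : ℕ} (h : 2 ≤ Δ) : 1 ≤ Nat.clog 2 Δ := by
  have := (Nat.lt_clog_iff_pow_lt (by norm_num : (1:ℕ) < 2) (x := Δ) (y := 0)).mpr (by simp; omega)
  omega

private lemma L_add_two_le {Δ : ℕ} (h : 2 ≤ Δ) : Nat.clog 2 (Nat.clog 2 Δ) + 2 ≤ Δ := by
  rcases Nat.lt_or_ge Δ 4 with h4 | h4
  · interval_cases Δ
    · have h1 : Nat.clog 2 2 ≤ 1 := (Nat.clog_le_iff_le_pow (by norm_num)).mpr (by norm_num)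
      have h2 : Nat.clog 2 (Nat.clog 2 2) ≤ Nat.clog 2 1 := Nat.clog_mono_right _ h1
      rw [Nat.clog_one_right] at h2
      omega
    · have h1 : Nat.clog 2 3 ≤ 2 := (Nat.clog_le_iff_le_pow (by norm_num)).mpr (by norm_num)
      have h2 : Nat.clog 2 (Nat.clog 2 3) ≤ Nat.clog 2 2 := Nat.clog_mono_right _ h1
      have h3 : Nat.clog 2 2 ≤ 1 := (Nat.clog_le_iff_le_pow (by norm_num)).mpr (by norm_num)
      omega
  · have h1 : Nat.clog 2 Δ ≤ Δ - 2 := by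
      rw [Nat.clog_le_iff_le_pow (by norm_num)]
      exact le_two_pow_sub_two h4
    have h2 : Nat.clog 2 (Nat.clog 2 Δ) ≤ Nat.clog 2 Δ := clog2_le_self _
    omega

private lemma k_le_L_add_two {Δ : ℕ} (h : 2 ≤ Δ) :
    Nat.clog 2 (Nat.clog 2 (Δ+1)) + 1 ≤ Nat.clog 2 (Nat.clog 2 Δ) + 2 := by
  have h1 : Nat.clog 2 (Δ+1) ≤ Nat.clog 2 Δ + 1 := clog2_succ_le (by omega)
  have h2 : Nat.clog 2 (Nat.clog 2 (Δ+1)) ≤ Nat.clog 2 (Nat.clog 2 Δ + 1) :=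
    Nat.clog_mono_right _ h1
  have h3 : Nat.clog 2 (Nat.clog 2 Δ + 1) ≤ Nat.clog 2 (Nat.clog 2 Δ) + 1 :=
    clog2_succ_le (clog2_ge_one h)
  omega

private lemma boxhelp_disj {a b c d : ℝ} (h : b < c ∨ d < a) : ¬ (max a c ≤ min b d) := by
  intro hle
  rcases h with h | h
  · have h1 : c ≤ b := le_trans (le_max_right a c) (hle.trans (min_le_left b d))
    linarith
  · have h1 : a ≤ d := le_trans (le_max_left a c) (hle.trans (min_le_right b d))
    linarith

open Finset in
/-- If `G` is the line graph of a multigraph and has maximum degree `Δ ≥ 2`, then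
`box(G) ≤ 2Δ(⌈log₂ log₂ Δ⌉ + 3) + 1`. -/
theorem boxicity_lineGraph {V E : Type*} [Fintype V] [Fintype E]
    (ends : E → Sym2 V) (hloop : ∀ e, ¬ (ends e).IsDiag)
    (Δ : ℕ) (hΔ : Δ = @SimpleGraph.maxDegree E (lineGraph ends) _ (Classical.decRel _))
    (h2 : 2 ≤ Δ) :
    (lineGraph ends).boxicity ≤ 2 * Δ * (Nat.clog 2 (Nat.clog 2 Δ) + 3) + 1 := by
  classical
  set G := lineGraph ends with hG
  have hGadj : ∀ a b : E, G.Adj a b ↔ a ≠ b ∧ ∃ v, v ∈ ends a ∧ v ∈ ends b := by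
    intro a b
    rw [hG, lineGraph, SimpleGraph.fromRel_adj]
    constructor
    · rintro ⟨hne, ⟨v, h1', h2'⟩ | ⟨v, h1', h2'⟩⟩
      exacts [⟨hne, v, h1', h2'⟩, ⟨hne, v, h2', h1'⟩]
    · rintro ⟨hne, v, h1', h2'⟩
      exact ⟨hne, Or.inl ⟨v, h1', h2'⟩⟩
  letI instdec : DecidableRel G.Adj := Classical.decRel _
  have hdeg : ∀ e : E, (Finset.univ.filter (fun f => G.Adj e f)).card ≤ Δ := by
    intro e
    rw [← SimpleGraph.neighborFinset_eq_filter, hΔ]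
    exact SimpleGraph.degree_le_maxDegree G e
  -- proper colouring of the line graph
  obtain ⟨c, hcle, hcprop⟩ := exists_greedy_coloring (fun a b => G.Adj a b)
    (fun a b h => G.adj_symm h) Δ hdeg
  have hc2 : ∀ {a b : E}, G.Adj a b → c a ≠ c b := by
    intro a b h
    exact hcprop a b ((hGadj a b).mp h).1 h
  -- the auxiliary "co-cover" relation and its colouring
  set R2 : E → E → Prop := fun e₁ e₂ => e₁ ≠ e₂ ∧ c e₁ = c e₂ ∧
    ∃ f, G.Adj f e₁ ∧ G.Adj f e₂ with hR2def
  have hR2symm : ∀ a b, R2 a b → R2 b a := by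
    rintro a b ⟨h1, h2, f, h3, h4⟩
    exact ⟨h1.symm, h2.symm, f, h4, h3⟩
  have hdeg2 : ∀ e₁ : E, (Finset.univ.filter (fun e₂ => R2 e₁ e₂)).card ≤ Δ := by
    intro e₁
    have hcard : (Finset.univ.filter (fun e₂ => R2 e₁ e₂)).card ≤
        (Finset.univ.filter (fun f => G.Adj e₁ f)).card := by
      apply Finset.card_le_card_of_injOn
        (fun e₂ => if h : R2 e₁ e₂ then h.2.2.choose else e₁)
      · intro e₂ he₂
        rw [mem_coe, mem_filter] at he₂
        dsimp only; rw [dif_pos he₂.2]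
        have hw := he₂.2.2.2.choose_spec
        rw [mem_coe, mem_filter]
        exact ⟨mem_univ _, G.adj_symm hw.1⟩
      · intro e₂ he₂ e₂' he₂' heq
        simp only [coe_filter, Set.mem_setOf_eq] at he₂ he₂'
        dsimp only at heq
        rw [dif_pos he₂.2, dif_pos he₂'.2] at heq
        set w := he₂.2.2.2.choose with hwd
        have hw : G.Adj w e₁ ∧ G.Adj w e₂ := he₂.2.2.2.choose_spec
        have hw' : G.Adj w e₂' := by
          have := he₂'.2.2.2.choose_spec
          rw [← heq] at this
          exact this.2
        by_contra hnee
        -- shared vertices on w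
        obtain ⟨x₁, hx₁w, hx₁e₁⟩ := ((hGadj w e₁).mp hw.1).2
        obtain ⟨x₂, hx₂w, hx₂e₂⟩ := ((hGadj w e₂).mp hw.2).2
        obtain ⟨x₃, hx₃w, hx₃e₂'⟩ := ((hGadj w e₂').mp hw').2
        have hcc : c e₂ = c e₂' := he₂.2.2.1.symm.trans he₂'.2.2.1
        obtain ⟨p, q, hpq⟩ : ∃ p q, ends w = s(p, q) :=
          Sym2.ind (fun p q => ⟨p, q, rfl⟩) (ends w)
        rw [hpq, Sym2.mem_iff] at hx₁w hx₂w hx₃w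
        by_cases h23 : x₂ = x₃
        · exact hc2 ((hGadj e₂ e₂').mpr ⟨hnee, x₂, hx₂e₂, h23 ▸ hx₃e₂'⟩) hcc
        · have hx1or : x₁ = x₂ ∨ x₁ = x₃ := by
            rcases hx₂w with h2' | h2' <;> rcases hx₃w with h3' | h3'
            · exact absurd (h2'.trans h3'.symm) h23
            · rcases hx₁w with h1' | h1'
              · exact Or.inl (h1'.trans h2'.symm)
              · exact Or.inr (h1'.trans h3'.symm)
            · rcases hx₁w with h1' | h1'
              · exact Or.inr (h1'.trans h3'.symm)
              · exact Or.inl (h1'.trans h2'.symm)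
            · exact absurd (h2'.trans h3'.symm) h23
          rcases hx1or with h | h
          · exact hc2 ((hGadj e₁ e₂).mpr ⟨he₂.2.1, x₁, hx₁e₁, h ▸ hx₂e₂⟩) he₂.2.2.1
          · exact hc2 ((hGadj e₁ e₂').mpr ⟨he₂'.2.1, x₁, hx₁e₁, h ▸ hx₃e₂'⟩) he₂'.2.2.1
    exact hcard.trans (hdeg e₁)
  obtain ⟨φ, hφle, hφprop⟩ := exists_greedy_coloring R2 hR2symm Δ hdeg2
  -- numerology
  set m := Nat.clog 2 (Δ+1) with hmdef
  set k := Nat.clog 2 m + 1 with hkdef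
  have hm2 : 2 ≤ m := by
    have h1 : (2:ℕ)^1 < Δ + 1 := by omega
    have h2' := (Nat.lt_clog_iff_pow_lt (by norm_num : (1:ℕ) < 2)).mpr h1
    omega
  have hk2 : 2 ≤ k := by
    have h1 : (2:ℕ)^0 < m := by omega
    have h2' := (Nat.lt_clog_iff_pow_lt (by norm_num : (1:ℕ) < 2)).mpr h1
    omega
  have hΔ1pow : Δ + 1 ≤ 2^m := Nat.le_pow_clog (by norm_num) _
  have hφlt : ∀ e, φ e < 2^m := fun e => lt_of_lt_of_le (Nat.lt_succ_of_le (hφle e)) hΔ1pow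
  -- injective weights in (0,1)
  set n := Fintype.card E with hndef
  set en := Fintype.equivFin E with hendef
  set τ : E → ℝ := fun e => ((en e : ℕ) + 1 : ℝ) / (n + 1) with hτdef
  have hτpos : ∀ e, 0 < τ e := by
    intro e
    apply div_pos (by positivity) (by positivity)
  have hτlt : ∀ e, τ e < 1 := by
    intro e
    rw [hτdef]
    rw [div_lt_one (by positivity)]
    have h := (en e).isLt
    push_cast
    exact_mod_cast Nat.succ_lt_succ h
  have hτinj : ∀ e f, e ≠ f → τ e ≠ τ f := by
    intro e f hne heq
    rw [hτdef] at heq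
    dsimp only at heq
    rw [div_eq_div_iff (by positivity) (by positivity)] at heq
    have h0 : ((n:ℝ) + 1) ≠ 0 := by positivity
    have h1 : ((en e : ℕ) : ℝ) + 1 = ((en f : ℕ) : ℝ) + 1 := mul_right_cancel₀ h0 heq
    have h2'' : (en e : ℕ) + 1 = (en f : ℕ) + 1 := by exact_mod_cast h1
    have h3 : (en e) = (en f) := Fin.ext (by omega)
    exact hne (en.injective h3)
  set F : ℕ → ℕ := fun r => maskNat r m with hFdef
  set blk : ℕ → E → ℕ := fun r e => (φ e) ^^^ F r with hblkdef
  have hblklt : ∀ r e, blk r e < 2^m := fun r e => Nat.xor_lt_two_pow (hφlt e) (maskNat_lt r m)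
  set pos : ℕ → Bool → E → ℝ := fun r ζ e => 3 * (blk r e : ℝ) + (if ζ then τ e else -τ e)
    with hposdef
  set Bg : ℝ := 3 * 2^m + 3 with hBgdef
  have habs : ∀ (ζ : Bool) e, -1 < (if ζ then τ e else -τ e) ∧ (if ζ then τ e else -τ e) < 1 := by
    intro ζ e
    have h1 := hτpos e
    have h2' := hτlt e
    cases ζ <;> constructor <;> simp <;> linarith
  have hposBg : ∀ r ζ e, pos r ζ e < Bg ∧ -Bg < pos r ζ e := by
    intro r ζ e
    have h1 := habs ζ e
    have h3 : (blk r e : ℝ) < 2^m := by exact_mod_cast hblklt r e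
    have h4 : (0:ℝ) ≤ (blk r e : ℝ) := Nat.cast_nonneg _
    have h5 : (0:ℝ) < 2^m := by positivity
    constructor
    · rw [hposdef, hBgdef]
      dsimp only
      nlinarith [h1.1, h1.2]
    · rw [hposdef, hBgdef]
      dsimp only
      nlinarith [h1.1, h1.2]
  have hpos_lt : ∀ r (ζ ζ' : Bool) e f, blk r e < blk r f → pos r ζ e < pos r ζ' f := by
    intro r ζ ζ' e f hb
    have h1 := habs ζ e
    have h2' := habs ζ' f
    have h3 : (blk r e : ℝ) + 1 ≤ (blk r f : ℝ) := by exact_mod_cast hb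
    rw [hposdef]
    dsimp only
    nlinarith [h1.1, h1.2, h2'.1, h2'.2]
  have hblkinj : ∀ r e f, φ e ≠ φ f → blk r e ≠ blk r f := by
    intro r e f hphi heq
    apply hphi
    have h := congrArg (fun t => t ^^^ F r) heq
    rw [hblkdef] at h
    dsimp only at h
    rwa [xor_cancel_right, xor_cancel_right] at h
  have hpos_same : ∀ r (ζ : Bool) e f, φ e = φ f →
      pos r ζ e - pos r ζ f = (if ζ then τ e - τ f else τ f - τ e) := by
    intro r ζ e f h
    rw [hposdef, hblkdef]
    dsimp only
    rw [h]
    cases ζ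
    · simp only [Bool.false_eq_true, if_false]
      ring
    · simp only [if_true]
      ring
  have hpos_ne : ∀ r (ζ : Bool) e f, e ≠ f → pos r ζ e ≠ pos r ζ f := by
    intro r ζ e f hne heq
    by_cases hphi : φ e = φ f
    · have h := hpos_same r ζ e f hphi
      rw [heq, sub_self] at h
      have hττ := hτinj e f hne
      apply hττ
      cases ζ
      · simp only [Bool.false_eq_true, if_false] at h
        linarith
      · simp only [if_true] at h
        linarith
    · rcases Nat.lt_or_ge (blk r e) (blk r f) with h | h
      · exact absurd heq (ne_of_lt (hpos_lt r ζ ζ e f h))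
      · have hlt : blk r f < blk r e := lt_of_le_of_ne h (Ne.symm (hblkinj r e f hphi))
        exact absurd heq.symm (ne_of_lt (hpos_lt r ζ ζ f e hlt))
  -- the dimension data
  set hsgn : Fin k → Bool → ℝ := fun r ζ => if r.val = 0 ∧ ζ = false then -Bg else Bg
    with hsgndef
  set Tset : Fin (Δ+1) → E → Finset E :=
    fun i f => univ.filter (fun e' => c e' = i.val ∧ G.Adj f e') with hTdef
  set unc : Fin (Δ+1) → E → Prop :=
    fun i f => ∃ w ∈ ends f, ¬ ∃ e', c e' = i.val ∧ w ∈ ends e' with huncdef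
  set X : Fin (Δ+1) → Fin k → Bool → E → Finset ℝ := fun i r ζ f =>
    (Tset i f).image (pos r.val ζ) ∪ (if unc i f then {hsgn r ζ} else ∅) with hXdef
  have hTmem : ∀ (i : Fin (Δ+1)) f e', c e' = i.val → G.Adj f e' → e' ∈ Tset i f := by
    intro i f e' h1 h2'
    rw [hTdef]
    exact mem_filter.mpr ⟨mem_univ _, h1, h2'⟩
  have hmempts : ∀ (i : Fin (Δ+1)) (r : Fin k) (ζ : Bool) f e', c e' = i.val → G.Adj f e' →
      pos r.val ζ e' ∈ X i r ζ f := by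
    intro i r ζ f e' h1 h2'
    rw [hXdef]
    exact mem_union_left _ (mem_image.mpr ⟨e', hTmem i f e' h1 h2', rfl⟩)
  have hmemsgn : ∀ (i : Fin (Δ+1)) (r : Fin k) (ζ : Bool) f, unc i f →
      hsgn r ζ ∈ X i r ζ f := by
    intro i r ζ f hu
    rw [hXdef]
    exact mem_union_right _ (by rw [if_pos hu]; exact mem_singleton_self _)
  have hXchar : ∀ (i : Fin (Δ+1)) (r : Fin k) (ζ : Bool) f t, t ∈ X i r ζ f →
      (∃ e', (c e' = i.val ∧ G.Adj f e') ∧ pos r.val ζ e' = t) ∨ (unc i f ∧ t = hsgn r ζ) := by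
    intro i r ζ f t ht
    rw [hXdef] at ht
    rcases mem_union.mp ht with h | h
    · obtain ⟨e', he', rfl⟩ := mem_image.mp h
      rw [hTdef] at he'
      have := mem_filter.mp he'
      exact Or.inl ⟨e', this.2, rfl⟩
    · by_cases hu : unc i f
      · rw [if_pos hu] at h
        exact Or.inr ⟨hu, mem_singleton.mp h⟩
      · rw [if_neg hu] at h
        exact absurd h (notMem_empty t)
  have hXne : ∀ (i : Fin (Δ+1)) (r : Fin k) (ζ : Bool) f, ¬ (c f = i.val) →
      (X i r ζ f).Nonempty := by
    intro i r ζ f hcf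
    by_cases hu : unc i f
    · exact ⟨hsgn r ζ, hmemsgn i r ζ f hu⟩
    · simp only [huncdef] at hu
      push_neg at hu
      obtain ⟨x, y, hxy⟩ : ∃ x y, ends f = s(x,y) := Sym2.ind (fun x y => ⟨x,y,rfl⟩) (ends f)
      have hxmem : x ∈ ends f := by rw [hxy]; exact Sym2.mem_iff.mpr (Or.inl rfl)
      obtain ⟨e', he'c, he'x⟩ := hu x hxmem
      have hadjfe : G.Adj f e' := (hGadj f e').mpr
        ⟨fun hh => hcf (hh ▸ he'c), x, hxmem, he'x⟩
      exact ⟨pos r.val ζ e', hmempts i r ζ f e' he'c hadjfe⟩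
  set lf : E → (Fin (Δ+1) × Fin k × Bool) → ℝ := fun f d =>
    if h : c f = d.1.val then pos d.2.1.val d.2.2 f
    else (X d.1 d.2.1 d.2.2 f).min' (hXne d.1 d.2.1 d.2.2 f h) with hlfdef
  set rf : E → (Fin (Δ+1) × Fin k × Bool) → ℝ := fun f d =>
    if h : c f = d.1.val then pos d.2.1.val d.2.2 f
    else (X d.1 d.2.1 d.2.2 f).max' (hXne d.1 d.2.1 d.2.2 f h) with hrfdef
  have hlf_pt : ∀ e (i : Fin (Δ+1)) (r : Fin k) (ζ : Bool) (h : c e = i.val),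
      lf e (i,r,ζ) = pos r.val ζ e ∧ rf e (i,r,ζ) = pos r.val ζ e := by
    intro e i r ζ h
    rw [hlfdef, hrfdef]
    exact ⟨dif_pos h, dif_pos h⟩
  have hlf_int : ∀ f (i : Fin (Δ+1)) (r : Fin k) (ζ : Bool) (h : ¬ (c f = i.val)),
      lf f (i,r,ζ) = (X i r ζ f).min' (hXne i r ζ f h) ∧
      rf f (i,r,ζ) = (X i r ζ f).max' (hXne i r ζ f h) := by
    intro f i r ζ h
    rw [hlfdef, hrfdef]
    exact ⟨dif_neg h, dif_neg h⟩
  have hlr : ∀ (v : E) (d : Fin (Δ+1) × Fin k × Bool), lf v d ≤ rf v d := by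
    intro v d
    obtain ⟨i, r, ζ⟩ := d
    by_cases h : c v = i.val
    · rw [(hlf_pt v i r ζ h).1, (hlf_pt v i r ζ h).2]
    · rw [(hlf_int v i r ζ h).1, (hlf_int v i r ζ h).2]
      exact Finset.min'_le _ _ (Finset.max'_mem _ _)
  -- validity of the representation on adjacent pairs
  have hadj : ∀ u v, G.Adj u v → ∀ d : Fin (Δ+1) × Fin k × Bool,
      max (lf u d) (lf v d) ≤ min (rf u d) (rf v d) := by
    intro u v huv d
    obtain ⟨i, r, ζ⟩ := d
    have hcne : c u ≠ c v := hc2 huv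
    obtain ⟨w, hwu, hwv⟩ := ((hGadj u v).mp huv).2
    have key : ∃ t, lf u (i,r,ζ) ≤ t ∧ t ≤ rf u (i,r,ζ) ∧ lf v (i,r,ζ) ≤ t ∧ t ≤ rf v (i,r,ζ) := by
      by_cases hu : c u = i.val <;> by_cases hv : c v = i.val
      · exact absurd (hu.trans hv.symm) hcne
      · refine ⟨pos r.val ζ u, le_of_eq (hlf_pt u i r ζ hu).1,
          le_of_eq (hlf_pt u i r ζ hu).2.symm, ?_, ?_⟩
        · rw [(hlf_int v i r ζ hv).1]
          exact Finset.min'_le _ _ (hmempts i r ζ v u hu (G.adj_symm huv))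
        · rw [(hlf_int v i r ζ hv).2]
          exact Finset.le_max' _ _ (hmempts i r ζ v u hu (G.adj_symm huv))
      · refine ⟨pos r.val ζ v, ?_, ?_, le_of_eq (hlf_pt v i r ζ hv).1,
          le_of_eq (hlf_pt v i r ζ hv).2.symm⟩
        · rw [(hlf_int u i r ζ hu).1]
          exact Finset.min'_le _ _ (hmempts i r ζ u v hv huv)
        · rw [(hlf_int u i r ζ hu).2]
          exact Finset.le_max' _ _ (hmempts i r ζ u v hv huv)
      · by_cases hcov : ∃ e', c e' = i.val ∧ w ∈ ends e'
        · obtain ⟨e', he'c, he'w⟩ := hcov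
          have hadju : G.Adj u e' := (hGadj u e').mpr
            ⟨fun hh => hu (hh ▸ he'c), w, hwu, he'w⟩
          have hadjv : G.Adj v e' := (hGadj v e').mpr
            ⟨fun hh => hv (hh ▸ he'c), w, hwv, he'w⟩
          refine ⟨pos r.val ζ e', ?_, ?_, ?_, ?_⟩
          · rw [(hlf_int u i r ζ hu).1]
            exact Finset.min'_le _ _ (hmempts i r ζ u e' he'c hadju)
          · rw [(hlf_int u i r ζ hu).2]
            exact Finset.le_max' _ _ (hmempts i r ζ u e' he'c hadju)
          · rw [(hlf_int v i r ζ hv).1]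
            exact Finset.min'_le _ _ (hmempts i r ζ v e' he'c hadjv)
          · rw [(hlf_int v i r ζ hv).2]
            exact Finset.le_max' _ _ (hmempts i r ζ v e' he'c hadjv)
        · have huncu : unc i u := by
            rw [huncdef]
            exact ⟨w, hwu, fun hc' => hcov hc'⟩
          have huncv : unc i v := by
            rw [huncdef]
            exact ⟨w, hwv, fun hc' => hcov hc'⟩
          refine ⟨hsgn r ζ, ?_, ?_, ?_, ?_⟩
          · rw [(hlf_int u i r ζ hu).1]
            exact Finset.min'_le _ _ (hmemsgn i r ζ u huncu)
          · rw [(hlf_int u i r ζ hu).2]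
            exact Finset.le_max' _ _ (hmemsgn i r ζ u huncu)
          · rw [(hlf_int v i r ζ hv).1]
            exact Finset.min'_le _ _ (hmemsgn i r ζ v huncv)
          · rw [(hlf_int v i r ζ hv).2]
            exact Finset.le_max' _ _ (hmemsgn i r ζ v huncv)
    obtain ⟨t, h1, h2', h3, h4⟩ := key
    exact boxhelp_common h1 h2' h3 h4
  have hblk_eq : ∀ (r : ℕ) e', blk r e' = φ e' ^^^ maskNat r m := by
    intro r e'
    rw [hblkdef]
  -- separation of non-adjacent pairs
  have hsep : ∀ u v, u ≠ v → ¬ G.Adj u v → ∃ d : Fin (Δ+1) × Fin k × Bool,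
      ¬ (max (lf u d) (lf v d) ≤ min (rf u d) (rf v d)) := by
    intro e f hne hnadj
    have hk0 : 0 < k := by omega
    have hnoshare : ∀ w, w ∈ ends e → w ∈ ends f → False := fun w h1 h2' =>
      hnadj ((hGadj e f).mpr ⟨hne, w, h1, h2'⟩)
    set i : Fin (Δ+1) := ⟨c e, Nat.lt_succ_of_le (hcle e)⟩ with hidef
    have hci : c e = i.val := rfl
    have mkdisj_lt : ∀ (r : Fin k) (ζ : Bool), ¬ (c f = i.val) →
        (∀ t ∈ X i r ζ f, pos r.val ζ e < t) →
        ¬ (max (lf e (i,r,ζ)) (lf f (i,r,ζ)) ≤ min (rf e (i,r,ζ)) (rf f (i,r,ζ))) := by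
      intro r ζ hcf hall
      apply boxhelp_disj
      left
      rw [(hlf_pt e i r ζ hci).2, (hlf_int f i r ζ hcf).1]
      exact (Finset.lt_min'_iff _ _).mpr hall
    have mkdisj_gt : ∀ (r : Fin k) (ζ : Bool), ¬ (c f = i.val) →
        (∀ t ∈ X i r ζ f, t < pos r.val ζ e) →
        ¬ (max (lf e (i,r,ζ)) (lf f (i,r,ζ)) ≤ min (rf e (i,r,ζ)) (rf f (i,r,ζ))) := by
      intro r ζ hcf hall
      apply boxhelp_disj
      right
      rw [(hlf_pt e i r ζ hci).1, (hlf_int f i r ζ hcf).2]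
      exact (Finset.max'_lt_iff _ _).mpr hall
    by_cases hcf : c f = i.val
    · -- same colour: two distinct points
      refine ⟨(i, ⟨0, hk0⟩, true), ?_⟩
      have hpe := hlf_pt e i ⟨0, hk0⟩ true hci
      have hpf := hlf_pt f i ⟨0, hk0⟩ true hcf
      have hnep := hpos_ne 0 true e f hne
      apply boxhelp_disj
      rcases lt_or_gt_of_ne hnep with h | h
      · left; rw [hpe.2, hpf.1]; exact h
      · right; rw [hpf.2, hpe.1]; exact h
    · -- f receives an interval
      obtain ⟨x, y, hxy⟩ : ∃ x y, ends f = s(x,y) := Sym2.ind (fun x y => ⟨x,y,rfl⟩) (ends f)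
      have hxf : x ∈ ends f := by rw [hxy]; exact Sym2.mem_iff.mpr (Or.inl rfl)
      have hyf : y ∈ ends f := by rw [hxy]; exact Sym2.mem_iff.mpr (Or.inr rfl)
      have hcovuniq : ∀ w (e₁ e₂ : E), c e₁ = i.val → c e₂ = i.val →
          w ∈ ends e₁ → w ∈ ends e₂ → e₁ = e₂ := by
        intro w e₁ e₂ h1 h2' h3 h4
        by_contra hne12
        exact hc2 ((hGadj e₁ e₂).mpr ⟨hne12, w, h3, h4⟩) (h1.trans h2'.symm)
      have hTsub : ∀ e', e' ∈ Tset i f →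
          c e' = i.val ∧ G.Adj f e' ∧ (x ∈ ends e' ∨ y ∈ ends e') := by
        intro e' he'
        rw [hTdef] at he'
        have hm' := mem_filter.mp he'
        obtain ⟨hnef, w, hwf, hwe'⟩ := (hGadj f e').mp hm'.2.2
        rw [hxy, Sym2.mem_iff] at hwf
        rcases hwf with rfl | rfl
        · exact ⟨hm'.2.1, hm'.2.2, Or.inl hwe'⟩
        · exact ⟨hm'.2.1, hm'.2.2, Or.inr hwe'⟩
      have heT : ∀ e', e' ∈ Tset i f → e ≠ e' := by
        intro e' he' hee
        apply hnadj
        apply G.adj_symm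
        rw [hTdef] at he'
        exact hee ▸ (mem_filter.mp he').2.2
      -- one-cover configuration
      have onecov : ∀ (e₁ : E), c e₁ = i.val → G.Adj f e₁ → unc i f →
          (∀ e', e' ∈ Tset i f → e' = e₁) →
          ∃ d, ¬ (max (lf e d) (lf f d) ≤ min (rf e d) (rf f d)) := by
        intro e₁ h1 hadj1 hu hTeq
        have hee₁ : e ≠ e₁ := heT e₁ (hTmem i f e₁ h1 hadj1)
        have hchar : ∀ (r : Fin k) (ζ : Bool) t, t ∈ X i r ζ f →
            t = pos r.val ζ e₁ ∨ t = hsgn r ζ := by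
          intro r ζ t ht
          rcases hXchar i r ζ f t ht with ⟨e', he', rfl⟩ | ⟨_, rfl⟩
          · left; rw [hTeq e' (hTmem i f e' he'.1 he'.2)]
          · right; rfl
        by_cases hphi : φ e = φ e₁
        · rcases lt_or_gt_of_ne (hτinj e e₁ hee₁) with hττ | hττ
          · refine ⟨(i, ⟨0, hk0⟩, true), mkdisj_lt ⟨0, hk0⟩ true hcf ?_⟩
            intro t ht
            rcases hchar _ _ t ht with rfl | rfl
            · have hsame := hpos_same 0 true e e₁ hphi
              simp only [if_true] at hsame
              linarith
            · rw [hsgndef]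
              dsimp only
              rw [if_neg (by simp)]
              exact (hposBg 0 true e).1
          · have h1k : (1 : ℕ) < k := by omega
            refine ⟨(i, ⟨1, h1k⟩, false), mkdisj_lt ⟨1, h1k⟩ false hcf ?_⟩
            intro t ht
            rcases hchar _ _ t ht with rfl | rfl
            · have hsame := hpos_same 1 false e e₁ hphi
              simp only [Bool.false_eq_true, if_false] at hsame
              linarith
            · rw [hsgndef]
              dsimp only
              rw [if_neg (by norm_num)]
              exact (hposBg 1 false e).1
        · have hbne := hblkinj 0 e e₁ hphi
          rcases lt_or_gt_of_ne hbne with hb | hb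
          · refine ⟨(i, ⟨0, hk0⟩, true), mkdisj_lt ⟨0, hk0⟩ true hcf ?_⟩
            intro t ht
            rcases hchar _ _ t ht with rfl | rfl
            · exact hpos_lt 0 true true e e₁ hb
            · rw [hsgndef]
              dsimp only
              rw [if_neg (by simp)]
              exact (hposBg 0 true e).1
          · refine ⟨(i, ⟨0, hk0⟩, false), mkdisj_gt ⟨0, hk0⟩ false hcf ?_⟩
            intro t ht
            rcases hchar _ _ t ht with rfl | rfl
            · exact hpos_lt 0 false false e₁ e hb
            · rw [hsgndef]
              dsimp only
              rw [if_pos ⟨rfl, rfl⟩]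
              exact (hposBg 0 false e).2
      -- two-cover configuration
      have twocov : ∀ (e₁ e₂ : E), c e₁ = i.val → c e₂ = i.val → G.Adj f e₁ → G.Adj f e₂ →
          e₁ ≠ e₂ → (∀ (r : Fin k) (ζ : Bool) t, t ∈ X i r ζ f →
            t = pos r.val ζ e₁ ∨ t = pos r.val ζ e₂) →
          ∃ d, ¬ (max (lf e d) (lf f d) ≤ min (rf e d) (rf f d)) := by
        intro e₁ e₂ h1 h2' hadj1 hadj2 hne12 hchar
        have hee₁ : e ≠ e₁ := heT e₁ (hTmem i f e₁ h1 hadj1)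
        have hee₂ : e ≠ e₂ := heT e₂ (hTmem i f e₂ h2' hadj2)
        have hR2' : R2 e₁ e₂ := ⟨hne12, h1.trans h2'.symm, f, hadj1, hadj2⟩
        have hφ12 : φ e₁ ≠ φ e₂ := hφprop e₁ e₂ hne12 hR2'
        have inner : ∀ (g₁ g₂ : E), e ≠ g₁ → φ e = φ g₁ → φ g₁ ≠ φ g₂ →
            (∀ (r : Fin k) (ζ : Bool) t, t ∈ X i r ζ f →
              t = pos r.val ζ g₁ ∨ t = pos r.val ζ g₂) →
            ∃ d, ¬ (max (lf e d) (lf f d) ≤ min (rf e d) (rf f d)) := by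
          intro g₁ g₂ heg hφeg hφgg hchar'
          have hbne : blk 0 g₁ ≠ blk 0 g₂ := hblkinj 0 g₁ g₂ hφgg
          have hbe : blk 0 e = blk 0 g₁ := by
            rw [hblk_eq, hblk_eq, hφeg]
          have hτne := hτinj e g₁ heg
          rcases lt_or_gt_of_ne hbne with hb | hb
          · rcases lt_or_gt_of_ne hτne with hττ | hττ
            · refine ⟨(i, ⟨0, hk0⟩, true), mkdisj_lt ⟨0, hk0⟩ true hcf ?_⟩
              intro t ht
              rcases hchar' _ _ t ht with rfl | rfl
              · have hsame := hpos_same 0 true e g₁ hφeg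
                simp only [if_true] at hsame
                linarith
              · exact hpos_lt 0 true true e g₂ (hbe ▸ hb)
            · refine ⟨(i, ⟨0, hk0⟩, false), mkdisj_lt ⟨0, hk0⟩ false hcf ?_⟩
              intro t ht
              rcases hchar' _ _ t ht with rfl | rfl
              · have hsame := hpos_same 0 false e g₁ hφeg
                simp only [Bool.false_eq_true, if_false] at hsame
                linarith
              · exact hpos_lt 0 false false e g₂ (hbe ▸ hb)
          · rcases lt_or_gt_of_ne hτne with hττ | hττ
            · refine ⟨(i, ⟨0, hk0⟩, false), mkdisj_gt ⟨0, hk0⟩ false hcf ?_⟩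
              intro t ht
              rcases hchar' _ _ t ht with rfl | rfl
              · have hsame := hpos_same 0 false e g₁ hφeg
                simp only [Bool.false_eq_true, if_false] at hsame
                linarith
              · exact hpos_lt 0 false false g₂ e (hbe ▸ hb)
            · refine ⟨(i, ⟨0, hk0⟩, true), mkdisj_gt ⟨0, hk0⟩ true hcf ?_⟩
              intro t ht
              rcases hchar' _ _ t ht with rfl | rfl
              · have hsame := hpos_same 0 true e g₁ hφeg
                simp only [if_true] at hsame
                linarith
              · exact hpos_lt 0 true true g₂ e (hbe ▸ hb)
        by_cases hp1 : φ e = φ e₁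
        · exact inner e₁ e₂ hee₁ hp1 hφ12 hchar
        · by_cases hp2 : φ e = φ e₂
          · exact inner e₂ e₁ hee₂ hp2 (Ne.symm hφ12)
              (fun r ζ t ht => (hchar r ζ t ht).symm)
          · obtain ⟨r, hrk, hcase⟩ := exists_good_mask m (hφlt e) (hφlt e₁) (hφlt e₂) hp1 hp2
            have hrk' : r < k := by rw [hkdef]; exact hrk
            rcases hcase with ⟨ha1, ha2⟩ | ⟨ha1, ha2⟩
            · refine ⟨(i, ⟨r, hrk'⟩, true), mkdisj_lt ⟨r, hrk'⟩ true hcf ?_⟩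
              intro t ht
              rcases hchar _ _ t ht with rfl | rfl
              · exact hpos_lt r true true e e₁ (by rw [hblk_eq, hblk_eq]; exact ha1)
              · exact hpos_lt r true true e e₂ (by rw [hblk_eq, hblk_eq]; exact ha2)
            · refine ⟨(i, ⟨r, hrk'⟩, true), mkdisj_gt ⟨r, hrk'⟩ true hcf ?_⟩
              intro t ht
              rcases hchar _ _ t ht with rfl | rfl
              · exact hpos_lt r true true e₁ e (by rw [hblk_eq, hblk_eq]; exact ha1)
              · exact hpos_lt r true true e₂ e (by rw [hblk_eq, hblk_eq]; exact ha2)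
      -- coverage case analysis
      by_cases hx : ∃ e', c e' = i.val ∧ x ∈ ends e'
      · by_cases hy : ∃ e', c e' = i.val ∧ y ∈ ends e'
        · obtain ⟨e₁, h1c, h1x⟩ := hx
          obtain ⟨e₂, h2c, h2y⟩ := hy
          have hadj1 : G.Adj f e₁ := (hGadj f e₁).mpr ⟨fun hh => hcf (hh ▸ h1c), x, hxf, h1x⟩
          have hadj2 : G.Adj f e₂ := (hGadj f e₂).mpr ⟨fun hh => hcf (hh ▸ h2c), y, hyf, h2y⟩
          have huncf : ¬ unc i f := by
            simp only [huncdef]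
            push_neg
            intro w hw
            rw [hxy, Sym2.mem_iff] at hw
            rcases hw with rfl | rfl
            · exact ⟨e₁, h1c, h1x⟩
            · exact ⟨e₂, h2c, h2y⟩
          have hchar2 : ∀ (r : Fin k) (ζ : Bool) t, t ∈ X i r ζ f →
              t = pos r.val ζ e₁ ∨ t = pos r.val ζ e₂ := by
            intro r ζ t ht
            rcases hXchar i r ζ f t ht with ⟨e', he', rfl⟩ | ⟨hu, _⟩
            · have hsub := hTsub e' (hTmem i f e' he'.1 he'.2)
              rcases hsub.2.2 with hxe | hye
              · left; rw [hcovuniq x e' e₁ hsub.1 h1c hxe h1x]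
              · right; rw [hcovuniq y e' e₂ hsub.1 h2c hye h2y]
            · exact absurd hu huncf
          by_cases h12 : e₁ = e₂
          · subst h12
            have hee₁ : e ≠ e₁ := heT e₁ (hTmem i f e₁ h1c hadj1)
            rcases lt_or_gt_of_ne (hpos_ne 0 true e e₁ hee₁) with h | h
            · exact ⟨(i, ⟨0, hk0⟩, true), mkdisj_lt ⟨0, hk0⟩ true hcf (fun t ht => by
                rcases hchar2 _ _ t ht with rfl | rfl <;> exact h)⟩
            · exact ⟨(i, ⟨0, hk0⟩, true), mkdisj_gt ⟨0, hk0⟩ true hcf (fun t ht => by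
                rcases hchar2 _ _ t ht with rfl | rfl <;> exact h)⟩
          · exact twocov e₁ e₂ h1c h2c hadj1 hadj2 h12 hchar2
        · obtain ⟨e₁, h1c, h1x⟩ := hx
          have hadj1 : G.Adj f e₁ := (hGadj f e₁).mpr ⟨fun hh => hcf (hh ▸ h1c), x, hxf, h1x⟩
          have hu : unc i f := by
            simp only [huncdef]
            exact ⟨y, hyf, hy⟩
          have hTeq : ∀ e', e' ∈ Tset i f → e' = e₁ := by
            intro e' he'
            have hsub := hTsub e' he'
            rcases hsub.2.2 with hxe | hye
            · exact hcovuniq x e' e₁ hsub.1 h1c hxe h1x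
            · exact absurd ⟨e', hsub.1, hye⟩ hy
          exact onecov e₁ h1c hadj1 hu hTeq
      · by_cases hy : ∃ e', c e' = i.val ∧ y ∈ ends e'
        · obtain ⟨e₁, h1c, h1y⟩ := hy
          have hadj1 : G.Adj f e₁ := (hGadj f e₁).mpr ⟨fun hh => hcf (hh ▸ h1c), y, hyf, h1y⟩
          have hu : unc i f := by
            simp only [huncdef]
            exact ⟨x, hxf, hx⟩
          have hTeq : ∀ e', e' ∈ Tset i f → e' = e₁ := by
            intro e' he'
            have hsub := hTsub e' he'
            rcases hsub.2.2 with hxe | hye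
            · exact absurd ⟨e', hsub.1, hxe⟩ hx
            · exact hcovuniq y e' e₁ hsub.1 h1c hye h1y
          exact onecov e₁ h1c hadj1 hu hTeq
        · have hu : unc i f := by
            simp only [huncdef]
            exact ⟨x, hxf, hx⟩
          have hchar0 : ∀ (r : Fin k) (ζ : Bool) t, t ∈ X i r ζ f → t = hsgn r ζ := by
            intro r ζ t ht
            rcases hXchar i r ζ f t ht with ⟨e', he', rfl⟩ | ⟨_, rfl⟩
            · have hsub := hTsub e' (hTmem i f e' he'.1 he'.2)
              rcases hsub.2.2 with hxe | hye
              · exact absurd ⟨e', hsub.1, hxe⟩ hx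
              · exact absurd ⟨e', hsub.1, hye⟩ hy
            · rfl
          refine ⟨(i, ⟨0, hk0⟩, true), mkdisj_lt ⟨0, hk0⟩ true hcf ?_⟩
          intro t ht
          rw [hchar0 _ _ t ht, hsgndef]
          dsimp only
          rw [if_neg (by simp)]
          exact (hposBg 0 true e).1
  -- assemble
  have hcardD : Fintype.card (Fin (Δ+1) × Fin k × Bool) ≤
      2 * Δ * (Nat.clog 2 (Nat.clog 2 Δ) + 3) + 1 := by
    have hc' : Fintype.card (Fin (Δ+1) × Fin k × Bool) = (Δ+1) * (k * 2) := by
      simp [Fintype.card_prod]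
    rw [hc']
    have hkL : k ≤ Nat.clog 2 (Nat.clog 2 Δ) + 2 := by
      rw [hkdef, hmdef]
      exact k_le_L_add_two h2
    have hLΔ := L_add_two_le h2
    nlinarith [hkL, hLΔ]
  have hboxrep : G.HasBoxRep (2 * Δ * (Nat.clog 2 (Nat.clog 2 Δ) + 3) + 1) :=
    hasBoxRep_of_rep G lf rf hlr hadj hsep _ hcardD
  exact Nat.sInf_le hboxrep
end

section
/- For the d-dimensional hypercube graph H_d with d ≥ 2, box(H_d) ≥ (⌈log₂ log₂ d⌉ + 1)/2. -/
/-- The `d`-dimensional hypercube graph: vertices are bit strings of length `d`,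
adjacent iff they differ in exactly one position. -/
def hypercubeGraph (d : ℕ) : SimpleGraph (Fin d → Bool) :=
  SimpleGraph.fromRel (fun x y => hammingDist x y = 1)

open Finset

section Hyper
variable {d : ℕ}

def bvert (d : ℕ) (i : Fin d) : Fin d → Bool := fun p => decide (p = i)
def wvert (d : ℕ) (i j : Fin d) : Fin d → Bool := fun p => decide (p = i) || decide (p = j)

lemma wvert_comm (i j : Fin d) : wvert d i j = wvert d j i := by
  funext p; simp [wvert, Bool.or_comm]

lemma adj_iff (x y : Fin d → Bool) :
    (hypercubeGraph d).Adj x y ↔ x ≠ y ∧ hammingDist x y = 1 := by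
  rw [hypercubeGraph, SimpleGraph.fromRel_adj, hammingDist_comm y x, or_self]

lemma ham_bb {i j : Fin d} (h : i ≠ j) : hammingDist (bvert d i) (bvert d j) = 2 := by
  have hfil : ({p | bvert d i p ≠ bvert d j p} : Finset (Fin d)) = {i, j} := by
    ext p
    by_cases hpi : p = i <;> by_cases hpj : p = j <;> simp_all [bvert]
  rw [hammingDist, hfil, Finset.card_pair h]

lemma ham_bw {i j : Fin d} (h : i ≠ j) : hammingDist (bvert d i) (wvert d i j) = 1 := by
  have hfil : ({p | bvert d i p ≠ wvert d i j p} : Finset (Fin d)) = {j} := by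
    ext p
    by_cases hpi : p = i <;> by_cases hpj : p = j <;> simp_all [bvert, wvert]
  rw [hammingDist, hfil, Finset.card_singleton]

lemma ham_mw {i j m : Fin d} (hij : i ≠ j) (hmi : m ≠ i) (hmj : m ≠ j) :
    hammingDist (bvert d m) (wvert d i j) = 3 := by
  have hfil : ({p | bvert d m p ≠ wvert d i j p} : Finset (Fin d)) = {m, i, j} := by
    ext p
    simp only [Finset.mem_filter, Finset.mem_univ, true_and, Finset.mem_insert, Finset.mem_singleton]
    by_cases hpi : p = i <;> by_cases hpj : p = j <;> by_cases hpm : p = m <;>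
      simp_all [bvert, wvert]
  rw [hammingDist, hfil]
  rw [Finset.card_insert_of_notMem (by simp [hmi, hmj]), Finset.card_pair hij]

lemma bvert_ne {i j : Fin d} (h : i ≠ j) : bvert d i ≠ bvert d j := by
  intro hEq
  have h2 := congrFun hEq i
  simp [bvert, h] at h2

lemma b_ne_w_left {i j m : Fin d} (hmi : m ≠ i) : bvert d m ≠ wvert d i j := by
  intro hEq
  have h2 := congrFun hEq i
  simp [bvert, wvert, Ne.symm hmi] at h2

lemma b_ne_w_right {i j m : Fin d} (hmj : m ≠ j) : bvert d m ≠ wvert d i j := by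
  intro hEq
  have h2 := congrFun hEq j
  simp [bvert, wvert, Ne.symm hmj] at h2

end Hyper


section Combinatorics
variable {V α β : Type*} [LinearOrder α] [LinearOrder β]

open scoped Classical in
noncomputable def chainSet (f : V → α) (g : V → β) (X : Finset V) (x : V) : Finset (Finset V) :=
  X.powerset.filter (fun C => x ∈ C ∧ (∀ u ∈ C, f u ≤ f x) ∧
    ∀ u ∈ C, ∀ v ∈ C, f u < f v → g u ≤ g v)

noncomputable def chainLen (f : V → α) (g : V → β) (X : Finset V) (x : V) : ℕ :=
  (chainSet f g X x).sup Finset.card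

lemma mem_chainSet {f : V → α} {g : V → β} {X : Finset V} {x : V} {C : Finset V} :
    C ∈ chainSet f g X x ↔ C ⊆ X ∧ x ∈ C ∧ (∀ u ∈ C, f u ≤ f x) ∧
      ∀ u ∈ C, ∀ v ∈ C, f u < f v → g u ≤ g v := by
  classical
  simp [chainSet, Finset.mem_filter, Finset.mem_powerset]

lemma singleton_mem_chainSet {f : V → α} {g : V → β} {X : Finset V} {x : V} (hx : x ∈ X) :
    {x} ∈ chainSet f g X x := by
  rw [mem_chainSet]
  refine ⟨by simpa using hx, by simp, by simp, ?_⟩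
  intro u hu v hv huv
  simp only [Finset.mem_singleton] at hu hv
  subst hu; subst hv; exact absurd huv (lt_irrefl _)

lemma one_le_chainLen {f : V → α} {g : V → β} {X : Finset V} {x : V} (hx : x ∈ X) :
    1 ≤ chainLen f g X x := by
  have := Finset.le_sup (f := Finset.card) (singleton_mem_chainSet (f := f) (g := g) hx)
  rwa [Finset.card_singleton] at this

lemma chainLen_lt {f : V → α} {g : V → β} {X : Finset V} {x y : V}
    (hf : Set.InjOn f X) (hx : x ∈ X) (hy : y ∈ X)
    (hxy : f x < f y) (hg : g x ≤ g y) :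
    chainLen f g X x < chainLen f g X y := by
  classical
  obtain ⟨C, hC, hCcard⟩ := Finset.exists_mem_eq_sup (chainSet f g X x)
    ⟨{x}, singleton_mem_chainSet hx⟩ Finset.card
  rw [mem_chainSet] at hC
  obtain ⟨hCX, hxC, hCle, hCchain⟩ := hC
  have hyC : y ∉ C := fun hyC => absurd hxy (not_lt.2 (hCle y hyC))
  have hins : insert y C ∈ chainSet f g X y := by
    rw [mem_chainSet]
    refine ⟨Finset.insert_subset hy hCX, Finset.mem_insert_self _ _, ?_, ?_⟩
    · intro u hu
      rcases Finset.mem_insert.1 hu with rfl | hu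
      · exact le_rfl
      · exact le_of_lt (lt_of_le_of_lt (hCle u hu) hxy)
    · intro u hu v hv huv
      rcases Finset.mem_insert.1 hu with hu' | hu' <;> rcases Finset.mem_insert.1 hv with hv' | hv'
      · subst hu'; subst hv'; exact absurd huv (lt_irrefl _)
      · subst hu'; exact absurd huv (not_lt.2 (le_of_lt (lt_of_le_of_lt (hCle v hv') hxy)))
      · subst hv'
        rcases eq_or_lt_of_le (hCle u hu') with hux | hux
        · have : u = x := hf (hCX hu') hx hux
          subst this; exact hg
        · exact le_trans (hCchain u hu' x hxC hux) hg
      · exact hCchain u hu' v hv' huv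
  have : chainLen f g X x + 1 ≤ chainLen f g X y := by
    calc chainLen f g X x + 1 = C.card + 1 := by rw [chainLen, hCcard]
    _ = (insert y C).card := (Finset.card_insert_of_notMem hyC).symm
    _ ≤ chainLen f g X y := Finset.le_sup hins
  omega

lemma chain_es (f : V → α) (g : V → β) (X : Finset V) (hf : Set.InjOn f X)
    (m : ℕ) (hX : m * m < X.card) :
    ∃ Y ⊆ X, m < Y.card ∧
      ((∀ u ∈ Y, ∀ v ∈ Y, f u < f v → g u ≤ g v) ∨
       (∀ u ∈ Y, ∀ v ∈ Y, f u < f v → g v ≤ g u)) := by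
  classical
  by_contra hcon
  push_neg at hcon
  -- all chain lengths ≤ m
  have hbound : ∀ x ∈ X, chainLen f g X x ≤ m ∧ chainLen f (OrderDual.toDual ∘ g) X x ≤ m := by
    intro x hx
    constructor
    · by_contra hgt
      push_neg at hgt
      obtain ⟨C, hC, hCcard⟩ := Finset.exists_mem_eq_sup (chainSet f g X x)
        ⟨{x}, singleton_mem_chainSet hx⟩ Finset.card
      rw [mem_chainSet] at hC
      rw [chainLen, hCcard] at hgt
      obtain ⟨u, hu, v, hv, huv, hlt⟩ := (hcon C hC.1 hgt).1
      exact absurd (hC.2.2.2 u hu v hv huv) (not_le.2 hlt)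
    · by_contra hgt
      push_neg at hgt
      obtain ⟨C, hC, hCcard⟩ := Finset.exists_mem_eq_sup (chainSet f (OrderDual.toDual ∘ g) X x)
        ⟨{x}, singleton_mem_chainSet hx⟩ Finset.card
      rw [mem_chainSet] at hC
      rw [chainLen, hCcard] at hgt
      obtain ⟨u, hu, v, hv, huv, hlt⟩ := (hcon C hC.1 hgt).2
      exact absurd (hC.2.2.2 u hu v hv huv) (not_le.2 hlt)
  -- injection into Icc 1 m ×ˢ Icc 1 m
  have hinj : Set.InjOn (fun x => (chainLen f g X x, chainLen f (OrderDual.toDual ∘ g) X x)) X := by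
    have key : ∀ x ∈ X, ∀ y ∈ X, f x < f y →
        (chainLen f g X x, chainLen f (OrderDual.toDual ∘ g) X x) ≠
        (chainLen f g X y, chainLen f (OrderDual.toDual ∘ g) X y) := by
      intro x hx y hy hxy heq
      rcases le_total (g x) (g y) with hg | hg
      · have := chainLen_lt hf hx hy hxy hg
        have h1 := congrArg Prod.fst heq
        simp at h1; omega
      · have := chainLen_lt (g := OrderDual.toDual ∘ g) hf hx hy hxy hg
        have h2 := congrArg Prod.snd heq
        simp at h2; omega
    intro x hx y hy heq
    by_contra hne
    have hfne : f x ≠ f y := fun h => hne (hf hx hy h)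
    rcases hfne.lt_or_gt with h | h
    · exact key x hx y hy h heq
    · exact key y hy x hx h heq.symm
  have hcard : X.card ≤ ((Finset.Icc 1 m) ×ˢ (Finset.Icc 1 m)).card := by
    apply Finset.card_le_card_of_injOn _ _ hinj
    intro x hx
    rw [Finset.mem_coe, Finset.mem_product, Finset.mem_Icc, Finset.mem_Icc]
    exact ⟨⟨one_le_chainLen hx, (hbound x hx).1⟩, ⟨one_le_chainLen hx, (hbound x hx).2⟩⟩
  rw [Finset.card_product, Nat.card_Icc] at hcard
  simp at hcard
  omega

end Combinatorics


section Comb2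
variable {V α β : Type*} [LinearOrder α] [LinearOrder β]

lemma exists_sorted_triple (π : V → β) (X : Finset V) (hπ : Set.InjOn π X)
    (h : 3 ≤ X.card) :
    ∃ a ∈ X, ∃ b ∈ X, ∃ c ∈ X, π a < π b ∧ π b < π c := by
  classical
  obtain ⟨a, ha⟩ := Finset.card_pos (s := X) |>.1 (by omega)
  obtain ⟨b, hb⟩ := Finset.card_pos (s := X.erase a) |>.1 (by rw [Finset.card_erase_of_mem ha]; omega)
  obtain ⟨c, hc⟩ := Finset.card_pos (s := (X.erase a).erase b) |>.1
    (by rw [Finset.card_erase_of_mem hb, Finset.card_erase_of_mem ha]; omega)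
  have hbX : b ∈ X := Finset.mem_of_mem_erase hb
  have hcX : c ∈ X := Finset.mem_of_mem_erase (Finset.mem_of_mem_erase hc)
  have hab : a ≠ b := fun h => (Finset.ne_of_mem_erase hb) h.symm
  have hbc : b ≠ c := fun h => (Finset.ne_of_mem_erase hc) h.symm
  have hac : a ≠ c := fun h => (Finset.ne_of_mem_erase (Finset.mem_of_mem_erase hc)) h.symm
  have pab : π a ≠ π b := fun h => hab (hπ ha hbX h)
  have pbc : π b ≠ π c := fun h => hbc (hπ hbX hcX h)
  have pac : π a ≠ π c := fun h => hac (hπ ha hcX h)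
  rcases pab.lt_or_gt with h1 | h1 <;> rcases pbc.lt_or_gt with h2 | h2 <;>
    rcases pac.lt_or_gt with h3 | h3
  · exact ⟨a, ha, b, hbX, c, hcX, h1, h2⟩
  · exact ⟨a, ha, b, hbX, c, hcX, h1, h2⟩
  · exact ⟨a, ha, c, hcX, b, hbX, h3, h2⟩
  · exact ⟨c, hcX, a, ha, b, hbX, h3, h1⟩
  · exact ⟨b, hbX, a, ha, c, hcX, h1, h3⟩
  · exact ⟨b, hbX, c, hcX, a, ha, h2, h3⟩
  · exact ⟨c, hcX, b, hbX, a, ha, h2, h1⟩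
  · exact ⟨c, hcX, b, hbX, a, ha, h2, h1⟩

lemma middle_bound (t : ℕ) (π : V → β) (g : Fin t → V → α) (X : Finset V)
    (hπ : Set.InjOn π X)
    (H : ∀ a ∈ X, ∀ b ∈ X, ∀ c ∈ X, π a < π b → π b < π c →
      ∃ s, g s a < g s b ∧ g s c < g s b) :
    X.card ≤ 2 ^ 2 ^ t := by
  induction t generalizing X with
  | zero =>
    by_contra h
    push_neg at h
    norm_num at h
    obtain ⟨a, ha, b, hb, c, hc, h1, h2⟩ := exists_sorted_triple π X hπ (by omega)
    obtain ⟨s, -⟩ := H a ha b hb c hc h1 h2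
    exact s.elim0
  | succ t ih =>
    by_contra h
    push_neg at h
    have h' : 2 ^ 2 ^ t * 2 ^ 2 ^ t < X.card := by
      have : 2 ^ 2 ^ t * 2 ^ 2 ^ t = 2 ^ 2 ^ (t + 1) := by
        rw [← pow_add]; congr 1; omega
      omega
    obtain ⟨Y, hYX, hYcard, hY⟩ := chain_es π (g (Fin.last t)) X hπ _ h'
    have hbound : Y.card ≤ 2 ^ 2 ^ t := by
      apply ih (fun s => g s.castSucc) Y (hπ.mono hYX)
      intro a ha b hb c hc h1 h2
      obtain ⟨s, hs1, hs2⟩ := H a (hYX ha) b (hYX hb) c (hYX hc) h1 h2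
      rcases Fin.eq_castSucc_or_eq_last s with ⟨s', rfl⟩ | rfl
      · exact ⟨s', hs1, hs2⟩
      · exfalso
        rcases hY with hmono | hanti
        · exact absurd (hmono b hb c hc h2) (not_le.2 hs2)
        · exact absurd (hanti a ha b hb h1) (not_le.2 hs1)
    omega

lemma suitable_bound (t : ℕ) (g : Fin (t + 1) → V → α) (X : Finset V)
    (hg : ∀ s, Set.InjOn (g s) X)
    (H : ∀ i ∈ X, ∀ j ∈ X, ∀ m ∈ X, i ≠ j → m ≠ i → m ≠ j →
      ∃ s, g s i < g s m ∧ g s j < g s m) :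
    X.card ≤ 2 ^ 2 ^ t := by
  induction t generalizing X with
  | zero =>
    by_contra h
    push_neg at h
    norm_num at h
    obtain ⟨a, ha, b, hb, c, hc, h1, h2⟩ := exists_sorted_triple (g 0) X (hg 0) (by omega)
    have hab : a ≠ b := fun h => absurd (h ▸ h1) (lt_irrefl _)
    have hbc : b ≠ c := fun h => absurd (h ▸ h2) (lt_irrefl _)
    have hac : a ≠ c := fun h => absurd (h ▸ (h1.trans h2)) (lt_irrefl _)
    obtain ⟨s, hs1, hs2⟩ := H c hc b hb a ha (Ne.symm hbc) hac hab
    have : s = 0 := Fin.eq_zero s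
    subst this
    exact absurd hs1 (not_lt.2 (le_of_lt (h1.trans h2)))
  | succ t ih =>
    by_contra h
    push_neg at h
    have h' : 2 ^ 2 ^ t * 2 ^ 2 ^ t < X.card := by
      have : 2 ^ 2 ^ t * 2 ^ 2 ^ t = 2 ^ 2 ^ (t + 1) := by
        rw [← pow_add]; congr 1; omega
      omega
    obtain ⟨Y, hYX, hYcard, hY⟩ := chain_es (g 0) (g 1) X (hg 0) _ h'
    rcases hY with hmono | hanti
    · -- drop g 1, keep g 0 and g s for s ≥ 2
      set G : Fin (t + 1) → V → α := fun s => if s = 0 then g 0 else g s.succ with hG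
      have hbound : Y.card ≤ 2 ^ 2 ^ t := by
        apply ih G Y
        · intro s
          by_cases hs : s = 0
          · subst hs; simpa [hG] using (hg 0).mono hYX
          · simpa [hG, hs] using (hg s.succ).mono hYX
        · intro i hi j hj m hm hij hmi hmj
          obtain ⟨s, hs1, hs2⟩ := H i (hYX hi) j (hYX hj) m (hYX hm) hij hmi hmj
          by_cases hs0 : s = 0
          · subst hs0
            exact ⟨0, by simpa [hG] using hs1, by simpa [hG] using hs2⟩
          · by_cases hs1' : s = 1
            · subst hs1'
              -- convert g 1 witness to g 0 via comonotonicity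
              have key : ∀ x ∈ Y, ∀ z ∈ Y, x ≠ z → g 1 x < g 1 z → g 0 x < g 0 z := by
                intro x hx z hz hxz hlt
                have : g 0 x ≠ g 0 z := fun h => hxz ((hg 0) (hYX hx) (hYX hz) h)
                rcases this.lt_or_gt with h | h
                · exact h
                · exact absurd (hmono z hz x hx h) (not_le.2 hlt)
              exact ⟨0, by simpa [hG] using key i hi m hm (Ne.symm hmi) hs1,
                       by simpa [hG] using key j hj m hm (Ne.symm hmj) hs2⟩
            · have hsne : s ≠ 0 := hs0
              set s' := s.pred hsne with hs'
              have hs'0 : s' ≠ 0 := by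
                intro h0
                apply hs1'
                have := congrArg Fin.succ h0
                rw [Fin.succ_pred] at this
                simpa using this
              have hGs' : G s' = g s := by
                rw [hG]; simp only [if_neg hs'0]
                rw [hs', Fin.succ_pred]
              exact ⟨s', by rw [hGs']; exact hs1, by rw [hGs']; exact hs2⟩
      omega
    · -- anti case : middle property with functions g s.succ.succ
      have hbound : Y.card ≤ 2 ^ 2 ^ t := by
        apply middle_bound t (g 0) (fun s : Fin t => g s.succ.succ) Y ((hg 0).mono hYX)
        intro a ha b hb c hc h1 h2
        have hac : a ≠ c := fun h => absurd (h ▸ (h1.trans h2)) (lt_irrefl _)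
        have hba : b ≠ a := fun h => absurd (h ▸ h1) (lt_irrefl _)
        have hbc : b ≠ c := fun h => absurd (h ▸ h2) (lt_irrefl _)
        obtain ⟨s, hs1, hs2⟩ := H a (hYX ha) c (hYX hc) b (hYX hb) hac hba hbc
        by_cases hs0 : s = 0
        · subst hs0; exact absurd hs2 (not_lt.2 (le_of_lt h2))
        by_cases hs1' : s = 1
        · subst hs1'; exact absurd hs1 (not_lt.2 (hanti a ha b hb h1))
        have h0 : s.pred hs0 ≠ 0 := by
          intro h0
          apply hs1'
          have := congrArg Fin.succ h0
          rw [Fin.succ_pred] at this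
          simpa using this
        have hgs : ((s.pred hs0).pred h0).succ.succ = s := by
          rw [Fin.succ_pred, Fin.succ_pred]
        refine ⟨(s.pred hs0).pred h0, ?_, ?_⟩
        · show g ((s.pred hs0).pred h0).succ.succ a < g ((s.pred hs0).pred h0).succ.succ b
          rw [hgs]; exact hs1
        · show g ((s.pred hs0).pred h0).succ.succ c < g ((s.pred hs0).pred h0).succ.succ b
          rw [hgs]; exact hs2
      omega

end Comb2

lemma hyper_d_le {d k : ℕ} (hd : 2 ≤ d) (hrep : (hypercubeGraph d).HasBoxRep k) :
    1 ≤ k ∧ d ≤ 2 ^ 2 ^ (2 * k - 1) := by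
  classical
  obtain ⟨l, r, hlr, hiff⟩ := hrep
  have h01 : (⟨0, by omega⟩ : Fin d) ≠ ⟨1, by omega⟩ := Fin.ne_of_val_ne (by simp)
  have hv01 : bvert d ⟨0, by omega⟩ ≠ bvert d ⟨1, by omega⟩ := bvert_ne h01
  have hnadj01 : ¬ (hypercubeGraph d).Adj (bvert d ⟨0, by omega⟩) (bvert d ⟨1, by omega⟩) := by
    rw [adj_iff]
    rintro ⟨-, hham⟩
    rw [ham_bb h01] at hham
    omega
  have hk : 1 ≤ k := by
    by_contra hk0
    push_neg at hk0
    have hk0' : k = 0 := by omega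
    subst hk0'
    exact hnadj01 ((hiff _ _ hv01).mpr (fun i => i.elim0))
  refine ⟨hk, ?_⟩
  set G : Fin (2 * k - 1 + 1) → Fin d → ℝ ×ₗ Fin d := fun s u =>
    if hs : (s : ℕ) < k then toLex (l (bvert d u) ⟨(s : ℕ), hs⟩, u)
    else toLex (-(r (bvert d u) ⟨(s : ℕ) - k, by have := s.isLt; omega⟩), u) with hGdef
  have hGlow : ∀ (s : Fin k) (hsk : (s : ℕ) < 2 * k - 1 + 1) (u : Fin d),
      G ⟨(s : ℕ), hsk⟩ u = toLex (l (bvert d u) s, u) := by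
    intro s hsk u
    have hs : ((⟨(s : ℕ), hsk⟩ : Fin (2 * k - 1 + 1)) : ℕ) < k := s.isLt
    rw [hGdef]
    simp only [dif_pos hs]
  have hGhigh : ∀ (s : Fin k) (hsk : k + (s : ℕ) < 2 * k - 1 + 1) (u : Fin d),
      G ⟨k + (s : ℕ), hsk⟩ u = toLex (-(r (bvert d u) s), u) := by
    intro s hsk u
    have hs : ¬ ((⟨k + (s : ℕ), hsk⟩ : Fin (2 * k - 1 + 1)) : ℕ) < k := by simp
    rw [hGdef]
    simp only [dif_neg hs]
    have he : (⟨((⟨k + (s : ℕ), hsk⟩ : Fin (2 * k - 1 + 1)) : ℕ) - k,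
        by have := (⟨k + (s : ℕ), hsk⟩ : Fin (2 * k - 1 + 1)).isLt; omega⟩ : Fin k) = s :=
      Fin.ext (by simp)
    rw [he]
  have hinj : ∀ s, Set.InjOn (G s) (Finset.univ : Finset (Fin d)) := by
    intro s u _ v _ h
    by_cases hs : (s : ℕ) < k <;>
      [rw [hGdef] at h; rw [hGdef] at h] <;>
      [simp only [dif_pos hs] at h; simp only [dif_neg hs] at h] <;>
      exact congrArg (fun t => (ofLex t).2) h
  have key : ∀ i ∈ (Finset.univ : Finset (Fin d)), ∀ j ∈ (Finset.univ : Finset (Fin d)),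
      ∀ m ∈ (Finset.univ : Finset (Fin d)), i ≠ j → m ≠ i → m ≠ j →
      ∃ s, G s i < G s m ∧ G s j < G s m := by
    intro i _ j _ m _ hij hmi hmj
    set W := wvert d i j with hW
    have hWi : bvert d i ≠ W := b_ne_w_right hij
    have hWj : bvert d j ≠ W := b_ne_w_left (Ne.symm hij)
    have hWm : bvert d m ≠ W := b_ne_w_left hmi
    have hadj_i : (hypercubeGraph d).Adj (bvert d i) W := by
      rw [adj_iff]
      exact ⟨hWi, ham_bw hij⟩
    have hadj_j : (hypercubeGraph d).Adj (bvert d j) W := by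
      rw [adj_iff, hW, wvert_comm]
      exact ⟨by rw [← wvert_comm, ← hW]; exact hWj, ham_bw (Ne.symm hij)⟩
    have hnadj_m : ¬ (hypercubeGraph d).Adj (bvert d m) W := by
      rw [adj_iff]
      rintro ⟨-, hham⟩
      rw [hW, ham_mw hij hmi hmj] at hham
      omega
    have h1 := (hiff _ _ hWi).mp hadj_i
    have h2 := (hiff _ _ hWj).mp hadj_j
    have h3 : ∃ s, min (r (bvert d m) s) (r W s) < max (l (bvert d m) s) (l W s) := by
      by_contra hall
      push_neg at hall
      exact hnadj_m ((hiff _ _ hWm).mpr (fun s => hall s))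
    obtain ⟨s, hs⟩ := h3
    rcases lt_max_iff.mp hs with hcase | hcase
    · rcases min_lt_iff.mp hcase with hbad | hright
      · exact absurd hbad (not_lt.2 (hlr _ _))
      · -- r W s < l (bvert d m) s : left-endpoint witness
        have hsk : (s : ℕ) < 2 * k - 1 + 1 := by have := s.isLt; omega
        refine ⟨⟨(s : ℕ), hsk⟩, ?_, ?_⟩
        · rw [hGlow s hsk, hGlow s hsk, Prod.Lex.lt_iff]
          left
          have : l (bvert d i) s ≤ r W s :=
            le_trans (le_trans (le_max_left _ _) (h1 s)) (min_le_right _ _)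
          exact lt_of_le_of_lt this hright
        · rw [hGlow s hsk, hGlow s hsk, Prod.Lex.lt_iff]
          left
          have : l (bvert d j) s ≤ r W s :=
            le_trans (le_trans (le_max_left _ _) (h2 s)) (min_le_right _ _)
          exact lt_of_le_of_lt this hright
    · rcases min_lt_iff.mp hcase with hleft | hbad
      · -- r (bvert d m) s < l W s : right-endpoint witness
        have hsk : k + (s : ℕ) < 2 * k - 1 + 1 := by have := s.isLt; omega
        refine ⟨⟨k + (s : ℕ), hsk⟩, ?_, ?_⟩
        · rw [hGhigh s hsk, hGhigh s hsk, Prod.Lex.lt_iff]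
          left
          have : l W s ≤ r (bvert d i) s :=
            le_trans (le_trans (le_max_right _ _) (h1 s)) (min_le_left _ _)
          have h4 : r (bvert d m) s < r (bvert d i) s := lt_of_lt_of_le hleft this
          simpa using h4
        · rw [hGhigh s hsk, hGhigh s hsk, Prod.Lex.lt_iff]
          left
          have : l W s ≤ r (bvert d j) s :=
            le_trans (le_trans (le_max_right _ _) (h2 s)) (min_le_left _ _)
          have h4 : r (bvert d m) s < r (bvert d j) s := lt_of_lt_of_le hleft this
          simpa using h4
      · exact absurd hbad (not_lt.2 (hlr _ _))
  have hcard := suitable_bound (2 * k - 1) G Finset.univ hinj key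
  rwa [Finset.card_univ, Fintype.card_fin] at hcard

lemma exists_boxrep (d : ℕ) : ∃ k, (hypercubeGraph d).HasBoxRep k := by
  classical
  refine ⟨Fintype.card (Fin d → Bool), ?_⟩
  set e := Fintype.equivFin (Fin d → Bool) with he
  set lf : (Fin d → Bool) → Fin (Fintype.card (Fin d → Bool)) → ℝ := fun v i =>
    if v = e.symm i then 0 else if (hypercubeGraph d).Adj v (e.symm i) then 1 else 2 with hlf
  have keyle : ∀ a b : ℝ, |a - b| ≤ 1 → max a b ≤ min (a + 1) (b + 1) := by
    intro a b h
    rw [abs_le] at h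
    simp only [max_le_iff, le_min_iff]
    refine ⟨⟨by linarith, by linarith [h.2]⟩, ⟨by linarith [h.1], by linarith⟩⟩
  have hval : ∀ (x : Fin d → Bool) (i : Fin (Fintype.card (Fin d → Bool))),
      x ≠ e.symm i → lf x i = 1 ∨ lf x i = 2 := by
    intro x i hx
    by_cases hax : (hypercubeGraph d).Adj x (e.symm i)
    · left; simp [hlf, hx, hax]
    · right; simp [hlf, hx, hax]
  refine ⟨lf, fun v i => lf v i + 1, fun v i => by norm_num, ?_⟩
  intro u v huv
  constructor
  · intro hadj i
    show max (lf u i) (lf v i) ≤ min (lf u i + 1) (lf v i + 1)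
    by_cases hu : u = e.symm i <;> by_cases hv : v = e.symm i
    · exact absurd (hu.trans hv.symm) huv
    · have h1 : lf u i = 0 := by simp [hlf, hu]
      have h2 : lf v i = 1 := by simp [hlf, hv, hu ▸ hadj.symm]
      rw [h1, h2]; exact keyle _ _ (by norm_num)
    · have h1 : lf u i = 1 := by simp [hlf, hu, hv ▸ hadj]
      have h2 : lf v i = 0 := by simp [hlf, hv]
      rw [h1, h2]; exact keyle _ _ (by norm_num)
    · rcases hval u i hu with h1 | h1 <;> rcases hval v i hv with h2 | h2 <;>
        rw [h1, h2] <;> exact keyle _ _ (by norm_num)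
  · intro hall
    by_contra hnadj
    have h : max (lf u (e u)) (lf v (e u)) ≤ min (lf u (e u) + 1) (lf v (e u) + 1) :=
      hall (e u)
    have hsymm : e.symm (e u) = u := Equiv.symm_apply_apply _ _
    have h1 : lf u (e u) = 0 := by simp [hlf, hsymm]
    have h2 : lf v (e u) = 2 := by
      have hvu : ¬ (hypercubeGraph d).Adj v u := fun h' => hnadj h'.symm
      simp [hlf, hsymm, Ne.symm huv, hvu]
    rw [h1, h2] at h
    norm_num at h

/-- For `d ≥ 2`, `box(H_d) ≥ (⌈log₂ log₂ d⌉ + 1)/2`. -/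
theorem boxicity_hypercube_lower (d : ℕ) (hd : 2 ≤ d) :
    ((Nat.clog 2 (Nat.clog 2 d) + 1 : ℕ) : ℝ) / 2 ≤
      ((hypercubeGraph d).boxicity : ℝ) := by
  have hne : {k | (hypercubeGraph d).HasBoxRep k}.Nonempty := exists_boxrep d
  have hmem : (hypercubeGraph d).HasBoxRep ((hypercubeGraph d).boxicity) :=
    Nat.sInf_mem hne
  obtain ⟨hk1, hkd⟩ := hyper_d_le hd hmem
  set b := (hypercubeGraph d).boxicity with hb
  have c1 : Nat.clog 2 d ≤ 2 ^ (2 * b - 1) := (Nat.clog_le_iff_le_pow one_lt_two).mpr hkd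
  have c2 : Nat.clog 2 (Nat.clog 2 d) ≤ 2 * b - 1 := (Nat.clog_le_iff_le_pow one_lt_two).mpr c1
  have hfin : Nat.clog 2 (Nat.clog 2 d) + 1 ≤ 2 * b := by omega
  rw [div_le_iff₀ (by norm_num : (0:ℝ) < 2)]
  have hcast : ((Nat.clog 2 (Nat.clog 2 d) + 1 : ℕ) : ℝ) ≤ ((2 * b : ℕ) : ℝ) := by
    exact_mod_cast hfin
  push_cast at hcast ⊢
  linarith
end
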